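/- arXiv:1809.05191 — 2 statements merged into one kernel-verified Lean document; each statement's English description precedes it below -/
import Mathlib

section
/- For every n ≥ 5 there is a dense open subset W of (ℙ¹(ℂ))ⁿ such that for every (p₁,…,p_n) ∈ W the points p₁,…,p_n are pairwise distinct and the divisor ⟨p₁⟩+⋯+⟨p_n⟩ has trivial stabilizer: the only g ∈ PGL₂(ℂ) with g({p₁,…,p_n}) = {p₁,…,p_n} is the identity. -/
open scoped MatrixGroups

noncomputable section

/-- The complex projective line `ℙ¹(ℂ)`, with its standard (quotient) topology. -/
abbrev ProjLine := Projectivization ℂ (Fin 2 → ℂ)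

instance : TopologicalSpace ProjLine :=
  inferInstanceAs (TopologicalSpace (Quotient (projectivizationSetoid ℂ (Fin 2 → ℂ))))

/-- The projective transformation of `ℙ¹(ℂ)` induced by `g ∈ GL₂(ℂ)`; these are exactly
the elements of `PGL₂(ℂ)`, and an element of `PGL₂(ℂ)` is the identity iff the induced
transformation fixes every point. -/
def pAct (g : GL (Fin 2) ℂ) (p : ProjLine) : ProjLine :=
  Projectivization.map
    (LinearMap.GeneralLinearGroup.toLinearEquiv (Matrix.GeneralLinearGroup.toLin g)).toLinearMap
    (LinearMap.GeneralLinearGroup.toLinearEquiv (Matrix.GeneralLinearGroup.toLin g)).injective p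

/-- `dd x y = 0` iff the vectors `x y : ℂ²` are parallel. -/
def dd (x y : Fin 2 → ℂ) : ℂ := x 0 * y 1 - x 1 * y 0

lemma dd_mulVec (M : Matrix (Fin 2) (Fin 2) ℂ) (x y : Fin 2 → ℂ) :
    dd (M.mulVec x) (M.mulVec y) = M.det * dd x y := by
  simp [dd, Matrix.mulVec, dotProduct, Fin.sum_univ_two, Matrix.det_fin_two]
  ring

lemma dd_swap (x y : Fin 2 → ℂ) : dd x y = - dd y x := by simp [dd]; ring

lemma dd_zero_symm {x y : Fin 2 → ℂ} (h : dd x y = 0) : dd y x = 0 := by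
  rw [dd_swap]; simp [h]

/-- transitivity of parallelism through a nonzero vector -/
lemma dd_trans {x a b : Fin 2 → ℂ} (hx : x ≠ 0) (ha : dd x a = 0) (hb : dd x b = 0) :
    dd a b = 0 := by
  have h0 : ∀ i, dd a b * x i = dd a x * b i - dd b x * a i := by
    intro i; fin_cases i <;> (simp [dd]; ring)
  have hax : dd a x = 0 := by rw [dd_swap] at ha; exact neg_eq_zero.mp ha
  have hbx : dd b x = 0 := by rw [dd_swap] at hb; exact neg_eq_zero.mp hb
  have hz : ∀ i, dd a b * x i = 0 := by intro i; rw [h0 i, hax, hbx]; ring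
  rcases Function.ne_iff.1 hx with ⟨i, hi⟩
  rcases mul_eq_zero.1 (hz i) with h | h
  · exact h
  · exact absurd h hi

lemma vec_ne_zero_iff (x : Fin 2 → ℂ) : x ≠ 0 ↔ (x 0 ≠ 0 ∨ x 1 ≠ 0) := by
  constructor
  · intro h
    by_contra hc
    push_neg at hc
    exact h (funext fun i => by fin_cases i <;> simp [hc.1, hc.2])
  · rintro (h | h) hc <;> simp [hc] at h

/-- A quadratic form on `ℂ²` vanishing on three pairwise non-parallel vectors is zero. -/
lemma quad_zero {A B C : ℂ} {v₁ v₂ v₃ : Fin 2 → ℂ}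
    (h12 : dd v₁ v₂ ≠ 0) (h13 : dd v₁ v₃ ≠ 0) (h23 : dd v₂ v₃ ≠ 0)
    (e1 : A * (v₁ 0)^2 + B * (v₁ 0 * v₁ 1) + C * (v₁ 1)^2 = 0)
    (e2 : A * (v₂ 0)^2 + B * (v₂ 0 * v₂ 1) + C * (v₂ 1)^2 = 0)
    (e3 : A * (v₃ 0)^2 + B * (v₃ 0 * v₃ 1) + C * (v₃ 1)^2 = 0) :
    A = 0 ∧ B = 0 ∧ C = 0 := by
  set x1 := v₁ 0; set y1 := v₁ 1; set x2 := v₂ 0; set y2 := v₂ 1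
  set x3 := v₃ 0; set y3 := v₃ 1
  have hd : dd v₁ v₂ * dd v₁ v₃ * dd v₂ v₃ ≠ 0 := by
    exact mul_ne_zero (mul_ne_zero h12 h13) h23
  have hA : A * (dd v₁ v₂ * dd v₁ v₃ * dd v₂ v₃) = 0 := by
    simp only [dd]
    linear_combination (y2*y3*(x2*y3-x3*y2)) * e1 - (y1*y3*(x1*y3-x3*y1)) * e2
      + (y1*y2*(x1*y2-x2*y1)) * e3
  have hB : B * (dd v₁ v₂ * dd v₁ v₃ * dd v₂ v₃) = 0 := by
    simp only [dd]
    linear_combination (-(x2*y3+x3*y2)*(x2*y3-x3*y2)) * e1 + ((x1*y3+x3*y1)*(x1*y3-x3*y1)) * e2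
      - ((x1*y2+x2*y1)*(x1*y2-x2*y1)) * e3
  have hC : C * (dd v₁ v₂ * dd v₁ v₃ * dd v₂ v₃) = 0 := by
    simp only [dd]
    linear_combination (x2*x3*(x2*y3-x3*y2)) * e1 - (x1*x3*(x1*y3-x3*y1)) * e2
      + (x1*x2*(x1*y2-x2*y1)) * e3
  refine ⟨?_, ?_, ?_⟩
  · rcases mul_eq_zero.1 hA with h | h; exact h; exact absurd h hd
  · rcases mul_eq_zero.1 hB with h | h; exact h; exact absurd h hd
  · rcases mul_eq_zero.1 hC with h | h; exact h; exact absurd h hd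

/-- A matrix with three pairwise non-parallel "eigendirections" is scalar. -/
lemma eigen3_scalar {M : Matrix (Fin 2) (Fin 2) ℂ} {v₁ v₂ v₃ : Fin 2 → ℂ}
    (h12 : dd v₁ v₂ ≠ 0) (h13 : dd v₁ v₃ ≠ 0) (h23 : dd v₂ v₃ ≠ 0)
    (e1 : dd (M.mulVec v₁) v₁ = 0) (e2 : dd (M.mulVec v₂) v₂ = 0)
    (e3 : dd (M.mulVec v₃) v₃ = 0) :
    M = M 0 0 • (1 : Matrix (Fin 2) (Fin 2) ℂ) := by
  have key : ∀ v : Fin 2 → ℂ, dd (M.mulVec v) v =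
      (-(M 1 0)) * (v 0)^2 + (M 0 0 - M 1 1) * (v 0 * v 1) + (M 0 1) * (v 1)^2 := by
    intro v
    simp [dd, Matrix.mulVec, dotProduct, Fin.sum_univ_two]
    ring
  rw [key] at e1 e2 e3
  obtain ⟨hA, hB, hC⟩ := quad_zero h12 h13 h23 e1 e2 e3
  have h10 : M 1 0 = 0 := by rw [neg_eq_zero] at hA; exact hA
  have hd : M 1 1 = M 0 0 := (sub_eq_zero.mp hB).symm
  ext i j
  fin_cases i <;> fin_cases j <;>
    simp [Matrix.one_apply, h10, hC, hd]

/-- If a 2×2 matrix kills two non-parallel vectors it is zero. -/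
lemma kernel2_zero {M : Matrix (Fin 2) (Fin 2) ℂ} {u v : Fin 2 → ℂ}
    (huv : dd u v ≠ 0) (hu : M.mulVec u = 0) (hv : M.mulVec v = 0) : M = 0 := by
  have key : ∀ i j, M i j * dd u v = 0 := by
    intro i j
    have h1 : M i 0 * u 0 + M i 1 * u 1 = 0 := by
      have := congrFun hu i
      simpa [Matrix.mulVec, dotProduct, Fin.sum_univ_two] using this
    have h2 : M i 0 * v 0 + M i 1 * v 1 = 0 := by
      have := congrFun hv i
      simpa [Matrix.mulVec, dotProduct, Fin.sum_univ_two] using this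
    fin_cases j
    · show M i 0 * dd u v = 0
      simp only [dd]; linear_combination (v 1) * h1 - (u 1) * h2
    · show M i 1 * dd u v = 0
      simp only [dd]; linear_combination (-(v 0)) * h1 + (u 0) * h2
  ext i j
  rcases mul_eq_zero.1 (key i j) with h | h
  · simpa using h
  · exact absurd h huv

/-- A nonzero singular matrix cannot map three pairwise non-parallel vectors into
three pairwise non-parallel directions. -/
lemma rank_one_exclusion {M : Matrix (Fin 2) (Fin 2) ℂ} {u₁ u₂ u₃ w₁ w₂ w₃ : Fin 2 → ℂ}
    (hM : M ≠ 0) (hdet : M.det = 0)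
    (hu12 : dd u₁ u₂ ≠ 0) (hu13 : dd u₁ u₃ ≠ 0) (hu23 : dd u₂ u₃ ≠ 0)
    (hw12 : dd w₁ w₂ ≠ 0) (hw13 : dd w₁ w₃ ≠ 0) (hw23 : dd w₂ w₃ ≠ 0)
    (e1 : dd (M.mulVec u₁) w₁ = 0) (e2 : dd (M.mulVec u₂) w₂ = 0)
    (e3 : dd (M.mulVec u₃) w₃ = 0) : False := by
  -- helper: two indices with nonzero images give parallel targets
  have pair : ∀ (a b wa wb : Fin 2 → ℂ), M.mulVec a ≠ 0 → M.mulVec b ≠ 0 →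
      dd (M.mulVec a) wa = 0 → dd (M.mulVec b) wb = 0 → dd wa wb = 0 := by
    intro a b wa wb hna hnb ha hb
    have hab : dd (M.mulVec a) (M.mulVec b) = 0 := by rw [dd_mulVec, hdet]; ring
    have h1 : dd (M.mulVec b) wa = 0 := dd_zero_symm (dd_trans hna ha hab)
    exact dd_trans hnb h1 hb
  -- at most one of the three u's is killed by M
  by_cases h1 : M.mulVec u₁ = 0
  · by_cases h2 : M.mulVec u₂ = 0
    · exact hM (kernel2_zero hu12 h1 h2)
    · by_cases h3 : M.mulVec u₃ = 0
      · exact hM (kernel2_zero hu13 h1 h3)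
      · exact hw23 (pair u₂ u₃ w₂ w₃ h2 h3 e2 e3)
  · by_cases h2 : M.mulVec u₂ = 0
    · by_cases h3 : M.mulVec u₃ = 0
      · exact hM (kernel2_zero hu23 h2 h3)
      · exact hw13 (pair u₁ u₃ w₁ w₃ h1 h3 e1 e3)
    · exact hw12 (pair u₁ u₂ w₁ w₂ h1 h2 e1 e2)

open Projectivization in
lemma mk_eq_mk_iff_dd {v w : Fin 2 → ℂ} (hv : v ≠ 0) (hw : w ≠ 0) :
    Projectivization.mk ℂ v hv = Projectivization.mk ℂ w hw ↔ dd v w = 0 := by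
  rw [Projectivization.mk_eq_mk_iff]
  constructor
  · rintro ⟨a, rfl⟩
    simp only [dd, Pi.smul_apply, Units.smul_def, smul_eq_mul]
    ring
  · intro h
    rcases (vec_ne_zero_iff w).1 hw with hw0 | hw1
    · have hv0 : v 0 ≠ 0 := by
        intro hv0
        have : v 1 * w 0 = 0 := by
          simp only [dd, hv0, zero_mul] at h
          linear_combination -h
        rcases mul_eq_zero.1 this with h' | h'
        · exact hv (funext fun i => by fin_cases i <;> simp [hv0, h'])
        · exact hw0 h'
      refine ⟨Units.mk0 (v 0 / w 0) (div_ne_zero hv0 hw0), funext fun i => ?_⟩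
      fin_cases i
      · show v 0 / w 0 * w 0 = v 0
        field_simp
      · show v 0 / w 0 * w 1 = v 1
        rw [div_mul_eq_mul_div, eq_comm, eq_div_iff hw0]
        simp only [dd] at h; linear_combination -h
    · have hv1 : v 1 ≠ 0 := by
        intro hv1
        have : v 0 * w 1 = 0 := by
          simp only [dd, hv1, zero_mul] at h
          linear_combination h
        rcases mul_eq_zero.1 this with h' | h'
        · exact hv (funext fun i => by fin_cases i <;> simp [hv1, h'])
        · exact hw1 h'
      refine ⟨Units.mk0 (v 1 / w 1) (div_ne_zero hv1 hw1), funext fun i => ?_⟩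
      fin_cases i
      · show v 1 / w 1 * w 0 = v 0
        rw [div_mul_eq_mul_div, eq_comm, eq_div_iff hw1]
        simp only [dd] at h; linear_combination h
      · show v 1 / w 1 * w 1 = v 1
        field_simp

lemma gdet_ne (g : GL (Fin 2) ℂ) : (g : Matrix (Fin 2) (Fin 2) ℂ).det ≠ 0 := by
  have : IsUnit (g : Matrix (Fin 2) (Fin 2) ℂ) := ⟨g, rfl⟩
  rw [Matrix.isUnit_iff_isUnit_det] at this
  exact this.ne_zero

lemma g_mulVec_ne_zero (g : GL (Fin 2) ℂ) {v : Fin 2 → ℂ} (hv : v ≠ 0) :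
    (g : Matrix (Fin 2) (Fin 2) ℂ).mulVec v ≠ 0 := by
  intro h
  apply hv
  have h2 : ((g⁻¹ : GL (Fin 2) ℂ) : Matrix (Fin 2) (Fin 2) ℂ).mulVec
      ((g : Matrix (Fin 2) (Fin 2) ℂ).mulVec v) = 0 := by rw [h, Matrix.mulVec_zero]
  rwa [Matrix.mulVec_mulVec, ← Matrix.GeneralLinearGroup.coe_mul, inv_mul_cancel,
    Matrix.GeneralLinearGroup.coe_one, Matrix.one_mulVec] at h2

lemma pAct_mk (g : GL (Fin 2) ℂ) (v : Fin 2 → ℂ) (hv : v ≠ 0) :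
    pAct g (Projectivization.mk ℂ v hv)
      = Projectivization.mk ℂ ((g : Matrix (Fin 2) (Fin 2) ℂ).mulVec v)
          (g_mulVec_ne_zero g hv) := by
  unfold pAct
  rw [Projectivization.map_mk]
  rfl

lemma pAct_injective (g : GL (Fin 2) ℂ) : Function.Injective (pAct g) := by
  intro x y hxy
  rw [← x.mk_rep, ← y.mk_rep] at hxy ⊢
  rw [pAct_mk, pAct_mk, mk_eq_mk_iff_dd, dd_mulVec] at hxy
  rw [mk_eq_mk_iff_dd]
  rcases mul_eq_zero.1 hxy with h | h
  · exact absurd h (gdet_ne g)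
  · exact h

lemma pAct_id_of_scalar {g : GL (Fin 2) ℂ} {c : ℂ}
    (h : (g : Matrix (Fin 2) (Fin 2) ℂ) = c • (1 : Matrix (Fin 2) (Fin 2) ℂ)) :
    ∀ q : ProjLine, pAct g q = q := by
  intro q
  conv_lhs => rw [← q.mk_rep]
  conv_rhs => rw [← q.mk_rep]
  rw [pAct_mk, mk_eq_mk_iff_dd, h]
  rw [Matrix.smul_mulVec, Matrix.one_mulVec]
  simp only [dd, Pi.smul_apply, smul_eq_mul]
  ring

lemma dd_smul_right (c : ℂ) (x y : Fin 2 → ℂ) : dd x (c • y) = c * dd x y := by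
  simp [dd]; ring

lemma dd_smul_left (c : ℂ) (x y : Fin 2 → ℂ) : dd (c • x) y = c * dd x y := by
  simp [dd]; ring

lemma dd_pair (x y : ℂ) : dd ![x, 1] ![y, 1] = x - y := by simp [dd]

lemma pair_ne_zero (x : ℂ) : ![x, (1:ℂ)] ≠ 0 := by
  intro h
  have := congrFun h 1
  simp at this

lemma mulVec_ne_zero_of_det {M : Matrix (Fin 2) (Fin 2) ℂ} (hM : M.det ≠ 0)
    {u : Fin 2 → ℂ} (hu : u ≠ 0) : M.mulVec u ≠ 0 := by
  intro h
  apply hu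
  have h2 := congrArg (M.adjugate.mulVec ·) h
  simp only [Matrix.mulVec_mulVec, Matrix.mulVec_zero] at h2
  rw [Matrix.adjugate_mul, Matrix.smul_mulVec, Matrix.one_mulVec] at h2
  rcases smul_eq_zero.mp h2 with h | h
  · exact absurd h hM
  · exact h

/-- The row of the linear system expressing `M (v j) ∥ v (τ j)`. -/
def rowD (u w : Fin 2 → ℂ) : Fin 4 → ℂ := ![u 0 * w 1, u 1 * w 1, -(u 0 * w 0), -(u 1 * w 0)]

def matD {n : ℕ} (v : Fin n → Fin 2 → ℂ) (J : Fin 4 → Fin n) (τ : Fin n → Fin n) :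
    Matrix (Fin 4) (Fin 4) ℂ :=
  Matrix.of fun k => rowD (v (J k)) (v (τ (J k)))

def Mof (m : Fin 4 → ℂ) : Matrix (Fin 2) (Fin 2) ℂ := ![![m 0, m 1], ![m 2, m 3]]

lemma matD_mulVec {n : ℕ} (v : Fin n → Fin 2 → ℂ) (J : Fin 4 → Fin n) (τ : Fin n → Fin n)
    (m : Fin 4 → ℂ) (k : Fin 4) :
    (matD v J τ).mulVec m k = dd ((Mof m).mulVec (v (J k))) (v (τ (J k))) := by
  simp [matD, rowD, Mof, dd, Matrix.mulVec, dotProduct,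
    Fin.sum_univ_four, Fin.sum_univ_two]
  ring

lemma Mof_ne_zero {m : Fin 4 → ℂ} (hm : m ≠ 0) : Mof m ≠ 0 := by
  intro h
  apply hm
  funext k
  fin_cases k
  · simpa [Mof] using congrFun (congrFun h 0) 0
  · simpa [Mof] using congrFun (congrFun h 0) 1
  · simpa [Mof] using congrFun (congrFun h 1) 0
  · simpa [Mof] using congrFun (congrFun h 1) 1

/-- From vanishing of the 4×4 determinant, get a nonzero matrix satisfying the
four parallelism constraints. -/
lemma exists_M_of_det_zero {n : ℕ} {v : Fin n → Fin 2 → ℂ} {J : Fin 4 → Fin n}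
    {τ : Fin n → Fin n} (h : (matD v J τ).det = 0) :
    ∃ M : Matrix (Fin 2) (Fin 2) ℂ, M ≠ 0 ∧
      ∀ k : Fin 4, dd (M.mulVec (v (J k))) (v (τ (J k))) = 0 := by
  obtain ⟨m, hm, hmv⟩ := (Matrix.exists_mulVec_eq_zero_iff).2 h
  refine ⟨Mof m, Mof_ne_zero hm, fun k => ?_⟩
  rw [← matD_mulVec v J τ m k, hmv]
  rfl

/-- Conversely, a common nonzero solution forces the determinant to vanish. -/
lemma det_zero_of_exists_M {n : ℕ} {v : Fin n → Fin 2 → ℂ} {J : Fin 4 → Fin n}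
    {τ : Fin n → Fin n} {M : Matrix (Fin 2) (Fin 2) ℂ} (hM : M ≠ 0)
    (h : ∀ k : Fin 4, dd (M.mulVec (v (J k))) (v (τ (J k))) = 0) :
    (matD v J τ).det = 0 := by
  apply (Matrix.exists_mulVec_eq_zero_iff).1
  refine ⟨![M 0 0, M 0 1, M 1 0, M 1 1], ?_, ?_⟩
  · intro hz
    apply hM
    ext i j
    fin_cases i <;> fin_cases j
    · simpa using congrFun hz 0
    · simpa using congrFun hz 1
    · simpa using congrFun hz 2
    · simpa using congrFun hz 3
  · funext k
    rw [matD_mulVec]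
    have : Mof ![M 0 0, M 0 1, M 1 0, M 1 1] = M := by
      ext i j
      fin_cases i <;> fin_cases j <;> simp [Mof]
    rw [this]
    exact h k

lemma exists_J_v (n : ℕ) (hn : 5 ≤ n) (σ : Equiv.Perm (Fin n)) (hσ : σ ≠ 1) :
    ∃ J : Fin 4 → Fin n, ∃ v : Fin n → Fin 2 → ℂ, (matD v J ⇑σ).det ≠ 0 := by
  -- a point moved by σ
  have hex : ∃ a, σ a ≠ a := by
    by_contra hc
    push_neg at hc
    exact hσ (Equiv.ext fun x => by simpa using hc x)
  obtain ⟨a, ha⟩ := hex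
  set b := σ a with hb
  have hba : b ≠ a := ha
  -- three further indices avoiding a and b
  have hcard : 3 ≤ ({a, b}ᶜ : Finset (Fin n)).card := by
    have h2 : ({a, b} : Finset (Fin n)).card ≤ 2 := Finset.card_insert_le _ _ |>.trans (by simp)
    have := Finset.card_compl ({a, b} : Finset (Fin n))
    rw [this]
    have hn' : (5 : ℕ) ≤ Fintype.card (Fin n) := by simpa using hn
    omega
  obtain ⟨t, hts, htcard⟩ := Finset.exists_subset_card_eq hcard
  obtain ⟨j₂, j₃, j₄, h23, h24, h34, rfl⟩ := Finset.card_eq_three.1 htcard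
  have hmem : ∀ x ∈ ({j₂, j₃, j₄} : Finset (Fin n)), x ≠ a ∧ x ≠ b := by
    intro x hx
    have := hts hx
    simp only [Finset.mem_compl, Finset.mem_insert, Finset.mem_singleton] at this
    push_neg at this
    exact this
  obtain ⟨h2a, h2b⟩ := hmem j₂ (by simp)
  obtain ⟨h3a, h3b⟩ := hmem j₃ (by simp)
  obtain ⟨h4a, h4b⟩ := hmem j₄ (by simp)
  refine ⟨![a, j₂, j₃, j₄], ?_⟩
  by_contra hc
  push_neg at hc
  -- the family of tuples depending on z
  set tv : Fin n → ℂ := fun i => ((i : ℕ) : ℂ) with htv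
  have tv_inj : Function.Injective tv := by
    intro i j hij
    have : ((i : ℕ) : ℂ) = ((j : ℕ) : ℂ) := hij
    exact Fin.val_injective (Nat.cast_injective this)
  set vf : ℂ → Fin n → Fin 2 → ℂ := fun z i => if i = b then ![z, 1] else ![tv i, 1] with hvf
  -- for every z we obtain a nonzero matrix M with four parallelism constraints
  have key : ∀ z : ℂ, ∃ M : Matrix (Fin 2) (Fin 2) ℂ, M ≠ 0 ∧
      dd (M.mulVec ![tv a, 1]) ![z, 1] = 0 ∧
      dd (M.mulVec ![tv j₂, 1]) ![tv (σ j₂), 1] = 0 ∧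
      dd (M.mulVec ![tv j₃, 1]) ![tv (σ j₃), 1] = 0 ∧
      dd (M.mulVec ![tv j₄, 1]) ![tv (σ j₄), 1] = 0 := by
    intro z
    obtain ⟨M, hM0, hMk⟩ := exists_M_of_det_zero (hc (vf z))
    have e0 := hMk 0
    have e1 := hMk 1
    have e2 := hMk 2
    have e3 := hMk 3
    have hσ2 : σ j₂ ≠ b := fun h => h2a (σ.injective (h.trans hb))
    have hσ3 : σ j₃ ≠ b := fun h => h3a (σ.injective (h.trans hb))
    have hσ4 : σ j₄ ≠ b := fun h => h4a (σ.injective (h.trans hb))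
    have hJ0 : (![a, j₂, j₃, j₄] : Fin 4 → Fin n) 0 = a := rfl
    have hJ1 : (![a, j₂, j₃, j₄] : Fin 4 → Fin n) 1 = j₂ := rfl
    have hJ2 : (![a, j₂, j₃, j₄] : Fin 4 → Fin n) 2 = j₃ := rfl
    have hJ3 : (![a, j₂, j₃, j₄] : Fin 4 → Fin n) 3 = j₄ := rfl
    rw [hJ0] at e0; rw [hJ1] at e1; rw [hJ2] at e2; rw [hJ3] at e3
    rw [show vf z a = ![tv a, 1] from by simp [hvf, hba.symm],
        show vf z (σ a) = ![z, 1] from by simp [hvf, ← hb]] at e0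
    rw [show vf z j₂ = ![tv j₂, 1] from by simp [hvf, h2b],
        show vf z (σ j₂) = ![tv (σ j₂), 1] from by simp [hvf, hσ2]] at e1
    rw [show vf z j₃ = ![tv j₃, 1] from by simp [hvf, h3b],
        show vf z (σ j₃) = ![tv (σ j₃), 1] from by simp [hvf, hσ3]] at e2
    rw [show vf z j₄ = ![tv j₄, 1] from by simp [hvf, h4b],
        show vf z (σ j₄) = ![tv (σ j₄), 1] from by simp [hvf, hσ4]] at e3
    exact ⟨M, hM0, e0, e1, e2, e3⟩
  -- pairwise non-parallelism facts
  have ddt : ∀ i j : Fin n, i ≠ j → dd ![tv i, 1] ![tv j, 1] ≠ 0 := by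
    intro i j hij
    rw [dd_pair, sub_ne_zero]
    exact fun h => hij (tv_inj h)
  have hu12 := ddt j₂ j₃ h23
  have hu13 := ddt j₂ j₄ h24
  have hu23 := ddt j₃ j₄ h34
  have hw12 := ddt (σ j₂) (σ j₃) (fun h => h23 (σ.injective h))
  have hw13 := ddt (σ j₂) (σ j₄) (fun h => h24 (σ.injective h))
  have hw23 := ddt (σ j₃) (σ j₄) (fun h => h34 (σ.injective h))
  -- invertibility of any such M
  have inv_of : ∀ M : Matrix (Fin 2) (Fin 2) ℂ, M ≠ 0 →
      dd (M.mulVec ![tv j₂, 1]) ![tv (σ j₂), 1] = 0 →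
      dd (M.mulVec ![tv j₃, 1]) ![tv (σ j₃), 1] = 0 →
      dd (M.mulVec ![tv j₄, 1]) ![tv (σ j₄), 1] = 0 → M.det ≠ 0 := by
    intro M hM0 e1 e2 e3 hdet
    exact rank_one_exclusion hM0 hdet hu12 hu13 hu23 hw12 hw13 hw23 e1 e2 e3
  obtain ⟨M, hM0, f0, f1, f2, f3⟩ := key ((n : ℂ))
  obtain ⟨M', hM'0, g0, g1, g2, g3⟩ := key ((n : ℂ) + 1)
  have hdM : M.det ≠ 0 := inv_of M hM0 f1 f2 f3
  have hdM' : M'.det ≠ 0 := inv_of M' hM'0 g1 g2 g3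
  -- M u ∥ M' u for the three fixed constraints
  have par : ∀ (u w : Fin 2 → ℂ), dd (M.mulVec u) w = 0 → dd (M'.mulVec u) w = 0 →
      w ≠ 0 → dd (M.mulVec u) (M'.mulVec u) = 0 := by
    intro u w hMw hM'w hw
    exact dd_trans hw (dd_zero_symm hMw) (dd_zero_symm hM'w)
  have p1 := par _ _ f1 g1 (pair_ne_zero _)
  have p2 := par _ _ f2 g2 (pair_ne_zero _)
  have p3 := par _ _ f3 g3 (pair_ne_zero _)
  -- P := adj(M') * M is scalar
  set P : Matrix (Fin 2) (Fin 2) ℂ := M'.adjugate * M with hP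
  have hPu : ∀ u : Fin 2 → ℂ, dd (M.mulVec u) (M'.mulVec u) = 0 → dd (P.mulVec u) u = 0 := by
    intro u hu
    have h1 : dd (M'.adjugate.mulVec (M.mulVec u)) (M'.adjugate.mulVec (M'.mulVec u)) = 0 := by
      rw [dd_mulVec, hu, mul_zero]
    have h2 : M'.adjugate.mulVec (M'.mulVec u) = M'.det • u := by
      rw [Matrix.mulVec_mulVec, Matrix.adjugate_mul, Matrix.smul_mulVec,
        Matrix.one_mulVec]
    rw [h2, dd_smul_right] at h1
    have : P.mulVec u = M'.adjugate.mulVec (M.mulVec u) := by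
      rw [hP, ← Matrix.mulVec_mulVec]
    rw [this]
    rcases mul_eq_zero.1 h1 with h | h
    · exact absurd h hdM'
    · exact h
  have eP : P = P 0 0 • (1 : Matrix (Fin 2) (Fin 2) ℂ) :=
    eigen3_scalar hu12 hu13 hu23 (hPu _ p1) (hPu _ p2) (hPu _ p3)
  set c : ℂ := P 0 0 with hcdef
  have hdP : P.det ≠ 0 := by
    rw [hP, Matrix.det_mul, Matrix.det_adjugate]
    have : Fintype.card (Fin 2) - 1 = 1 := by simp
    rw [this, pow_one]
    exact mul_ne_zero hdM' hdM
  have hc0 : c ≠ 0 := by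
    intro h
    apply hdP
    rw [eP, h, zero_smul, Matrix.det_zero]
  -- relate M u₀ and M' u₀
  have hrel : M'.det • (M.mulVec ![tv a, 1]) = c • (M'.mulVec ![tv a, 1]) := by
    have h1 : M'.mulVec (P.mulVec ![tv a, 1]) = M'.det • (M.mulVec ![tv a, 1]) := by
      rw [Matrix.mulVec_mulVec, hP, ← Matrix.mul_assoc, Matrix.mul_adjugate,
        Matrix.smul_mul, Matrix.one_mul, Matrix.smul_mulVec]
    have h2 : P.mulVec ![tv a, 1] = c • ![tv a, 1] := by
      rw [eP, Matrix.smul_mulVec, Matrix.one_mulVec]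
    rw [← h1, h2, Matrix.mulVec_smul]
  have hMu0 : M.mulVec ![tv a, 1] ≠ 0 := mulVec_ne_zero_of_det hdM (pair_ne_zero _)
  have hM'u0 : M'.mulVec ![tv a, 1] ≠ 0 := mulVec_ne_zero_of_det hdM' (pair_ne_zero _)
  have hpar0 : dd (M.mulVec ![tv a, 1]) (M'.mulVec ![tv a, 1]) = 0 := by
    have := congrArg (fun w => dd w (M'.mulVec ![tv a, 1])) hrel
    simp only [dd_smul_left] at this
    have h2 : dd (M'.mulVec ![tv a, 1]) (M'.mulVec ![tv a, 1]) = 0 := by simp [dd]; ring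
    rw [h2, mul_zero] at this
    rcases mul_eq_zero.1 this.symm.symm with h | h
    · exact absurd h hdM'
    · exact h
  -- chain of parallels gives (n) = (n+1), contradiction
  have step1 : dd (M.mulVec ![tv a, 1]) ![(n : ℂ) + 1, 1] = 0 := by
    apply dd_trans hM'u0 (dd_zero_symm hpar0) g0
  have final : dd ![(n : ℂ), 1] ![(n : ℂ) + 1, 1] = 0 :=
    dd_trans hMu0 f0 step1
  rw [dd_pair] at final
  have : (-1 : ℂ) = 0 := by linear_combination final
  exact one_ne_zero (neg_eq_zero.mp this)

section Density

variable {n : ℕ}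

open Set

lemma analytic_coord (i : Fin n) (j : Fin 2) :
    AnalyticOnNhd ℂ (fun v : Fin n → Fin 2 → ℂ => v i j) Set.univ := fun x _ =>
  ((ContinuousLinearMap.proj j).comp
    (ContinuousLinearMap.proj (R := ℂ) (φ := fun _ : Fin n => Fin 2 → ℂ) i)).analyticAt x

lemma analytic_dd (i j : Fin n) :
    AnalyticOnNhd ℂ (fun v : Fin n → Fin 2 → ℂ => dd (v i) (v j)) Set.univ := by
  simp only [dd]
  exact ((analytic_coord i 0).mul (analytic_coord j 1)).sub
    ((analytic_coord i 1).mul (analytic_coord j 0))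

lemma analytic_entry (J : Fin 4 → Fin n) (τ : Fin n → Fin n) (k l : Fin 4) :
    AnalyticOnNhd ℂ (fun v : Fin n → Fin 2 → ℂ => matD v J τ k l) Set.univ := by
  fin_cases l
  · exact (analytic_coord (J k) 0).mul (analytic_coord (τ (J k)) 1)
  · exact (analytic_coord (J k) 1).mul (analytic_coord (τ (J k)) 1)
  · exact ((analytic_coord (J k) 0).mul (analytic_coord (τ (J k)) 0)).neg
  · exact ((analytic_coord (J k) 1).mul (analytic_coord (τ (J k)) 0)).neg

lemma analytic_det (J : Fin 4 → Fin n) (τ : Fin n → Fin n) :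
    AnalyticOnNhd ℂ (fun v : Fin n → Fin 2 → ℂ => (matD v J τ).det) Set.univ := by
  have : (fun v : Fin n → Fin 2 → ℂ => (matD v J τ).det) =
      fun v => ∑ σ : Equiv.Perm (Fin 4),
        ((Equiv.Perm.sign σ : ℤ) : ℂ) * ∏ k : Fin 4, matD v J τ (σ k) k := by
    funext v
    rw [Matrix.det_apply]
    congr 1
    funext σ
    rw [Units.smul_def, zsmul_eq_mul]
  rw [this]
  apply Finset.analyticOnNhd_fun_sum
  intro σ _
  exact analyticOnNhd_const.mul
    (Finset.analyticOnNhd_fun_prod _ fun k _ => analytic_entry J τ (σ k) k)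

lemma dense_ne_zero {f : (Fin n → Fin 2 → ℂ) → ℂ} (hf : AnalyticOnNhd ℂ f Set.univ)
    (hne : ∃ v, f v ≠ 0) : Dense {v | f v ≠ 0} := by
  rw [dense_iff_inter_open]
  rintro U hU ⟨x, hx⟩
  by_contra h
  rw [Set.not_nonempty_iff_eq_empty] at h
  have hzero : ∀ y ∈ U, f y = 0 := by
    intro y hy
    by_contra hfy
    exact Set.eq_empty_iff_forall_notMem.1 h y ⟨hy, hfy⟩
  have hev : f =ᶠ[nhds x] 0 := by
    filter_upwards [hU.mem_nhds hx] with y hy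
    exact hzero y hy
  have hconn : IsPreconnected (Set.univ : Set (Fin n → Fin 2 → ℂ)) :=
    (convex_univ : Convex ℝ (Set.univ : Set (Fin n → Fin 2 → ℂ))).isPreconnected
  have := hf.eqOn_zero_of_preconnected_of_eventuallyEq_zero hconn (Set.mem_univ x) hev
  obtain ⟨v, hv⟩ := hne
  exact hv (this (Set.mem_univ v))

lemma open_ne_zero {f : (Fin n → Fin 2 → ℂ) → ℂ} (hf : AnalyticOnNhd ℂ f Set.univ) :
    IsOpen {v | f v ≠ 0} := by
  have hcont : Continuous f :=
    continuous_iff_continuousAt.2 fun x => (hf x (Set.mem_univ x)).continuousAt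
  exact isOpen_compl_iff.mpr (isClosed_singleton.preimage hcont)

end Density

section QuotTop

open Set

abbrev Svec := { v : Fin 2 → ℂ // v ≠ 0 }

/-- The quotient map onto the projective line. -/
def piq : Svec → ProjLine := fun v => Projectivization.mk ℂ v.1 v.2

lemma piq_surjective : Function.Surjective piq := fun q =>
  ⟨⟨q.rep, q.rep_nonzero⟩, q.mk_rep⟩

lemma continuous_piq : Continuous piq := continuous_quotient_mk'

/-- Scalar multiplication by a unit as a homeomorphism of `Svec`. -/
def smulHomeo (c : ℂˣ) : Svec ≃ₜ Svec where
  toFun v := ⟨(c : ℂ) • v.1, smul_ne_zero (Units.ne_zero c) v.2⟩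
  invFun v := ⟨((c⁻¹ : ℂˣ) : ℂ) • v.1, smul_ne_zero (Units.ne_zero c⁻¹) v.2⟩
  left_inv v := by
    ext1
    simp [smul_smul]
  right_inv v := by
    ext1
    simp [smul_smul]
  continuous_toFun := Continuous.subtype_mk (by fun_prop) _
  continuous_invFun := Continuous.subtype_mk (by fun_prop) _

lemma isOpenMap_piq : IsOpenMap piq := by
  intro U hU
  have hsat : piq ⁻¹' (piq '' U) = ⋃ c : ℂˣ, (smulHomeo c) '' U := by
    ext x
    simp only [Set.mem_preimage, Set.mem_image, Set.mem_iUnion]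
    constructor
    · rintro ⟨u, hu, hux⟩
      have : Projectivization.mk ℂ u.1 u.2 = Projectivization.mk ℂ x.1 x.2 := hux
      rw [Projectivization.mk_eq_mk_iff] at this
      obtain ⟨a, ha⟩ := this
      refine ⟨a⁻¹, u, hu, ?_⟩
      ext1
      show ((a⁻¹ : ℂˣ) : ℂ) • u.1 = x.1
      rw [← ha]
      simp [smul_smul, Units.smul_def]
    · rintro ⟨c, u, hu, rfl⟩
      refine ⟨u, hu, ?_⟩
      show Projectivization.mk ℂ u.1 u.2 = Projectivization.mk ℂ ((c : ℂ) • u.1) _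
      refine (Projectivization.mk_eq_mk_iff ℂ _ _ u.2 (smul_ne_zero (Units.ne_zero c) u.2)).2 ?_
      exact ⟨c⁻¹, by simp [smul_smul, Units.smul_def]⟩
  have : IsOpen (piq ⁻¹' (piq '' U)) := by
    rw [hsat]
    exact isOpen_iUnion fun c => (smulHomeo c).isOpenMap _ hU
  exact this

lemma isOpen_image_piq {U : Set Svec} (hU : IsOpen U) : IsOpen (piq '' U) :=
  isOpenMap_piq U hU

end QuotTop

section Main

open Set

variable {n : ℕ}

/-- The comparison homeomorphism between the subtype of everywhere-nonzero tuples
and the product of subtypes. -/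
def psi : {v : Fin n → Fin 2 → ℂ // ∀ i, v i ≠ 0} ≃ₜ (Fin n → Svec) where
  toFun v := fun i => ⟨v.1 i, v.2 i⟩
  invFun w := ⟨fun i => (w i).1, fun i => (w i).2⟩
  left_inv v := rfl
  right_inv w := rfl
  continuous_toFun := continuous_pi fun i =>
    Continuous.subtype_mk ((continuous_apply i).comp continuous_subtype_val) _
  continuous_invFun := Continuous.subtype_mk
    (continuous_pi fun i => continuous_subtype_val.comp (continuous_apply i)) _

def rho : (Fin n → Svec) → (Fin n → Fin 2 → ℂ) := fun w i => (w i).1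

lemma isInducing_rho : Topology.IsInducing (rho (n := n)) := by
  have h1 : rho (n := n) = Subtype.val ∘ ⇑(psi (n := n)).symm := rfl
  rw [h1]
  exact Topology.IsInducing.subtypeVal.comp (psi (n := n)).symm.isInducing

lemma continuous_rho : Continuous (rho (n := n)) :=
  isInducing_rho.continuous

lemma dense_preimage_rho {G : Set (Fin n → Fin 2 → ℂ)} (hG : Dense G) :
    Dense (rho ⁻¹' G) := by
  rw [dense_iff_inter_open]
  rintro O hO ⟨x, hx⟩
  obtain ⟨V, hV, hVO⟩ := isInducing_rho.isOpen_iff.1 hO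
  have hxV : rho x ∈ V := by rw [← hVO] at hx; exact hx
  have hNZ : IsOpen {v : Fin n → Fin 2 → ℂ | ∀ i, v i ≠ 0} := by
    have : {v : Fin n → Fin 2 → ℂ | ∀ i, v i ≠ 0} = ⋂ i, {v | v i ≠ 0} := by
      ext v; simp
    rw [this]
    exact isOpen_iInter_of_finite fun i =>
      isOpen_compl_iff.mpr (isClosed_singleton.preimage (continuous_apply i))
  have hxNZ : rho x ∈ {v : Fin n → Fin 2 → ℂ | ∀ i, v i ≠ 0} := fun i => (x i).2
  obtain ⟨y, hyG, hyV, hyNZ⟩ : ∃ y, y ∈ G ∧ y ∈ V ∧ ∀ i, y i ≠ 0 := by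
    obtain ⟨y, hy1, hy2⟩ := (dense_iff_inter_open.1 hG) (V ∩ {v | ∀ i, v i ≠ 0})
      (hV.inter hNZ) ⟨rho x, hxV, hxNZ⟩
    exact ⟨y, hy2, hy1.1, hy1.2⟩
  refine ⟨fun i => ⟨y i, hyNZ i⟩, ?_, ?_⟩
  · rw [← hVO]
    exact hyV
  · exact hyG

theorem aux_main (n : ℕ) (hn : 5 ≤ n) :
    ∃ W : Set (Fin n → ProjLine), IsOpen W ∧ Dense W ∧
      ∀ p ∈ W, (∀ i j : Fin n, i ≠ j → p i ≠ p j) ∧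
        ∀ g : GL (Fin 2) ℂ, pAct g '' Set.range p = Set.range p →
          ∀ q : ProjLine, pAct g q = q := by
  classical
  choose J hJ using fun s : {σ : Equiv.Perm (Fin n) // σ ≠ 1} => exists_J_v n hn s.1 s.2
  -- the good conditions, as a finite family of dense open subsets of the vector space
  set cond : ({q : Fin n × Fin n // q.1 ≠ q.2} ⊕ {σ : Equiv.Perm (Fin n) // σ ≠ 1}) →
      Set (Fin n → Fin 2 → ℂ) :=
    Sum.elim (fun q => {v | dd (v q.1.1) (v q.1.2) ≠ 0})
      (fun s => {v | (matD v (J s) ⇑s.1).det ≠ 0}) with hcond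
  have hopen : ∀ i, IsOpen (cond i) := by
    rintro (q | s)
    · exact open_ne_zero (analytic_dd _ _)
    · exact open_ne_zero (analytic_det _ _)
  have hdense : ∀ i, Dense (cond i) := by
    rintro (q | s)
    · apply dense_ne_zero (analytic_dd _ _)
      refine ⟨fun k => ![((k : ℕ) : ℂ), 1], ?_⟩
      rw [dd_pair, sub_ne_zero]
      intro h
      exact q.2 (Fin.val_injective (Nat.cast_injective h))
    · exact dense_ne_zero (analytic_det _ _) (hJ s)
  have hGEdense : Dense (⋂ i, cond i) := dense_iInter_of_isOpen hopen hdense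
  have hGEopen : IsOpen (⋂ i, cond i) := isOpen_iInter_of_finite hopen
  -- pull back and push forward
  set GD : Set (Fin n → Svec) := rho ⁻¹' (⋂ i, cond i) with hGD
  have hGDopen : IsOpen GD := hGEopen.preimage continuous_rho
  have hGDdense : Dense GD := dense_preimage_rho hGEdense
  set Phi : (Fin n → Svec) → (Fin n → ProjLine) := Pi.map (fun _ => piq) with hPhi
  have hPhiOpen : IsOpenMap Phi :=
    IsOpenMap.piMap (fun _ => isOpenMap_piq) (Filter.Eventually.of_forall fun _ => piq_surjective)
  have hPhiCont : Continuous Phi := Continuous.piMap fun _ => continuous_piq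
  have hPhiSurj : Function.Surjective Phi := Function.Surjective.piMap fun _ => piq_surjective
  refine ⟨Phi '' GD, hPhiOpen _ hGDopen, hPhiSurj.denseRange.dense_image hPhiCont hGDdense, ?_⟩
  rintro p ⟨w, hw, rfl⟩
  -- notation for representatives
  set vE : Fin n → Fin 2 → ℂ := rho w with hvE
  have hmk : ∀ i, Phi w i = Projectivization.mk ℂ (vE i) (w i).2 := fun i => rfl
  have hddp : ∀ i j : Fin n, i ≠ j → dd (vE i) (vE j) ≠ 0 := by
    intro i j hij
    have := Set.mem_iInter.1 hw (Sum.inl ⟨(i, j), hij⟩)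
    exact this
  have hdist : ∀ i j : Fin n, i ≠ j → Phi w i ≠ Phi w j := by
    intro i j hij hc
    exact hddp i j hij ((mk_eq_mk_iff_dd (v := vE i) (w := vE j) (w i).2 (w j).2).1 hc)
  refine ⟨hdist, ?_⟩
  intro g hg
  -- extract the permutation induced by g
  have hex : ∀ i, ∃ j, Phi w j = pAct g (Phi w i) := by
    intro i
    have h1 : pAct g (Phi w i) ∈ pAct g '' Set.range (Phi w) :=
      Set.mem_image_of_mem _ (Set.mem_range_self i)
    rw [hg] at h1
    exact h1
  choose f hf using hex
  have hpinj : Function.Injective (Phi w) := by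
    intro i j hij
    by_contra hne
    exact hdist i j hne hij
  have hfinj : Function.Injective f := by
    intro i j hij
    apply hpinj
    apply pAct_injective g
    rw [← hf i, ← hf j, hij]
  have hbij := (Finite.injective_iff_bijective).1 hfinj
  set σ : Equiv.Perm (Fin n) := Equiv.ofBijective f hbij with hσdef
  have hσf : ∀ i, σ i = f i := fun i => rfl
  by_cases hσ1 : σ = 1
  · -- g fixes every point
    have hfix : ∀ i, pAct g (Phi w i) = Phi w i := by
      intro i
      have : f i = i := by rw [← hσf, hσ1]; rfl
      rw [← hf i, this]
    have hdd0 : ∀ i, dd ((g : Matrix (Fin 2) (Fin 2) ℂ).mulVec (vE i)) (vE i) = 0 := by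
      intro i
      have := hfix i
      exact (mk_eq_mk_iff_dd (g_mulVec_ne_zero g (w i).2) (w i).2).1
        ((pAct_mk g (vE i) (w i).2).symm.trans this)
    set i0 : Fin n := ⟨0, by omega⟩ with hi0
    set i1 : Fin n := ⟨1, by omega⟩ with hi1
    set i2 : Fin n := ⟨2, by omega⟩ with hi2
    have h01 : i0 ≠ i1 := by simp [hi0, hi1, Fin.ext_iff]
    have h02 : i0 ≠ i2 := by simp [hi0, hi2, Fin.ext_iff]
    have h12 : i1 ≠ i2 := by simp [hi1, hi2, Fin.ext_iff]
    have hsc := eigen3_scalar (hddp i0 i1 h01) (hddp i0 i2 h02) (hddp i1 i2 h12)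
      (hdd0 i0) (hdd0 i1) (hdd0 i2)
    exact pAct_id_of_scalar hsc
  · -- contradiction with the determinant condition
    exfalso
    have hdet := Set.mem_iInter.1 hw (Sum.inr ⟨σ, hσ1⟩)
    apply hdet
    apply det_zero_of_exists_M (M := (g : Matrix (Fin 2) (Fin 2) ℂ))
    · intro hz
      apply gdet_ne g
      rw [hz]
      exact Matrix.det_zero
    · intro k
      apply dd_zero_symm
      have := hf (J ⟨σ, hσ1⟩ k)
      exact (mk_eq_mk_iff_dd (v := vE (f (J ⟨σ, hσ1⟩ k))) (w (f (J ⟨σ, hσ1⟩ k))).2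
        (g_mulVec_ne_zero g (w (J ⟨σ, hσ1⟩ k)).2)).1
        (this.trans (pAct_mk g (vE (J ⟨σ, hσ1⟩ k)) (w (J ⟨σ, hσ1⟩ k)).2))
end Main

/-- **Statement 9.** For every `n ≥ 5` there is a dense open subset `W` of `(ℙ¹(ℂ))ⁿ` such
that for every tuple in `W` the points are pairwise distinct and the corresponding divisor
`⟨p₁⟩ + ⋯ + ⟨pₙ⟩` has trivial stabilizer in `PGL₂(ℂ)`: the only projective transformation
mapping the set `{p₁,…,pₙ}` onto itself is the identity. -/
theorem generic_divisor_trivial_stabilizer (n : ℕ) (hn : 5 ≤ n) :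
    ∃ W : Set (Fin n → ProjLine), IsOpen W ∧ Dense W ∧
      ∀ p ∈ W, (∀ i j : Fin n, i ≠ j → p i ≠ p j) ∧
        ∀ g : GL (Fin 2) ℂ, pAct g '' Set.range p = Set.range p →
          ∀ q : ProjLine, pAct g q = q := by
  exact aux_main n hn
end
end

section
/- Let a, b be nonzero complex numbers such that b/a is not a rational number, and let x₀, y₀ be nonzero complex numbers. If a polynomial f ∈ ℂ[x,y] satisfies f(e^{at}·x₀, e^{bt}·y₀) = 0 for every t ∈ ℂ, then f = 0. Consequently no algebraic curve in the affine plane contains the full orbit {(e^{at}x₀, e^{bt}y₀) : t ∈ ℂ}. -/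
open MvPolynomial

/-- The character `t ↦ exp (l * t)` as a monoid hom from `Multiplicative ℂ` to `ℂ`. -/
noncomputable def expHomAux (l : ℂ) : Multiplicative ℂ →* ℂ where
  toFun t := Complex.exp (l * t.toAdd)
  map_one' := by simp
  map_mul' x y := by simp [mul_add, Complex.exp_add]

lemma expHomAux_injective : Function.Injective expHomAux := by
  intro l m h
  by_contra hne
  have hd : l - m ≠ 0 := sub_ne_zero.mpr hne
  have h1 := congrArg (fun g : Multiplicative ℂ →* ℂ =>
    g (Multiplicative.ofAdd ((Real.pi * Complex.I) / (l - m)))) h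
  simp only [expHomAux, MonoidHom.coe_mk, OneHom.coe_mk, toAdd_ofAdd] at h1
  have h2 : Complex.exp ((l - m) * ((Real.pi * Complex.I) / (l - m))) = 1 := by
    rw [sub_mul, Complex.exp_sub, h1, div_self]
    exact Complex.exp_ne_zero _
  rw [mul_div_cancel₀ _ hd, Complex.exp_pi_mul_I] at h2
  norm_num at h2

/-- **Statement 19.** Let `a, b` be nonzero complex numbers with `b/a` irrational (not a
rational number), and `x₀, y₀` nonzero.  If a polynomial `f ∈ ℂ[x,y]` vanishes on the whole
orbit `{(e^{at}x₀, e^{bt}y₀) : t ∈ ℂ}` of the one-parameter diagonal group, then `f = 0`;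
hence no algebraic curve in the affine plane contains this orbit. -/
theorem poly_vanishing_on_exp_orbit_eq_zero (a b : ℂ) (ha : a ≠ 0) (hb : b ≠ 0)
    (hirr : ¬ ∃ q : ℚ, (q : ℂ) = b / a) (x₀ y₀ : ℂ) (hx : x₀ ≠ 0) (hy : y₀ ≠ 0)
    (f : MvPolynomial (Fin 2) ℂ)
    (hf : ∀ t : ℂ, eval ![Complex.exp (a * t) * x₀, Complex.exp (b * t) * y₀] f = 0) :
    f = 0 := by
  set lam : (Fin 2 →₀ ℕ) → ℂ := fun d => a * d 0 + b * d 1 with hlam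
  have hlaminj : Function.Injective lam := by
    intro d e h
    simp only [hlam] at h
    by_cases h01 : (d 1 : ℂ) = (e 1 : ℂ)
    · have h1 : d 1 = e 1 := Nat.cast_injective h01
      have h0 : (d 0 : ℂ) = (e 0 : ℂ) := by
        have h' := h
        rw [h01] at h'
        exact mul_left_cancel₀ ha (add_right_cancel h')
      have h0' : d 0 = e 0 := Nat.cast_injective h0
      ext i
      fin_cases i
      · exact h0'
      · exact h1
    · exfalso
      apply hirr
      refine ⟨((d 0 : ℚ) - (e 0 : ℚ)) / ((e 1 : ℚ) - (d 1 : ℚ)), ?_⟩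
      have hden : ((e 1 : ℂ) - (d 1 : ℂ)) ≠ 0 := by
        intro h'
        exact h01 (sub_eq_zero.mp h').symm
      push_cast
      rw [div_eq_div_iff hden ha]
      linear_combination h
  have hinj : Function.Injective (fun d : (Fin 2 →₀ ℕ) => expHomAux (lam d)) :=
    expHomAux_injective.comp hlaminj
  have hli : LinearIndependent ℂ (fun d : (Fin 2 →₀ ℕ) => ⇑(expHomAux (lam d))) :=
    (linearIndependent_monoidHom (Multiplicative ℂ) ℂ).comp _ hinj
  have key : ∀ d ∈ f.support, (coeff d f * x₀ ^ d 0 * y₀ ^ d 1 : ℂ) = 0 := by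
    refine linearIndependent_iff'.mp hli f.support
      (fun d => coeff d f * x₀ ^ d 0 * y₀ ^ d 1) ?_
    funext z
    set t := Multiplicative.toAdd z with ht
    have h0 := hf t
    rw [eval_eq'] at h0
    simp only [Finset.sum_apply, Pi.smul_apply, smul_eq_mul, Pi.zero_apply]
    rw [← h0]
    refine Finset.sum_congr rfl fun d _ => ?_
    have hprod : (∏ i : Fin 2,
        (![Complex.exp (a * t) * x₀, Complex.exp (b * t) * y₀]) i ^ d i)
        = (Complex.exp (a * t) * x₀) ^ d 0 * (Complex.exp (b * t) * y₀) ^ d 1 := by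
      rw [Fin.prod_univ_two]
      simp
    rw [hprod]
    show coeff d f * x₀ ^ d 0 * y₀ ^ d 1 * Complex.exp (lam d * t) = _
    have harg : lam d * t = (d 0 : ℂ) * (a * t) + (d 1 : ℂ) * (b * t) := by
      simp only [hlam]
      ring
    rw [harg, Complex.exp_add, mul_pow, mul_pow,
      ← Complex.exp_nat_mul, ← Complex.exp_nat_mul]
    ring
  ext d
  rw [coeff_zero]
  by_cases hd : d ∈ f.support
  · have := key d hd
    have h1 : x₀ ^ d 0 ≠ 0 := pow_ne_zero _ hx
    have h2 : y₀ ^ d 1 ≠ 0 := pow_ne_zero _ hy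
    simp only [mul_eq_zero, or_iff_left h2, or_iff_left h1] at this
    exact this
  · exact notMem_support_iff.mp hd
end
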